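/- For a finite graph G = (V,E) and a 0-1 labeling x of the edges, the set of edges labeled 1 is a multicut of G (i.e., the set of edges straddling distinct blocks of some partition of V) if and only if for every cycle C in G and every edge e in C, x_e ≤ ∑_{e' ∈ C \ {e}} x_{e'}. -/

import Mathlib

/-- `M` is a multicut of `G`: `M` consists of edges of `G` and there is a
partition of the vertices (encoded by a labeling `f`) such that an edge of `G`
belongs to `M` iff its endpoints lie in distinct blocks. -/
def IsMulticut {V : Type*} (G : SimpleGraph V) (M : Finset (Sym2 V)) : Prop :=
  ↑M ⊆ G.edgeSet ∧ ∃ f : V → ℕ, ∀ v w : V, G.Adj v w → (s(v, w) ∈ M ↔ f v ≠ f w)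

private lemma walk_zero {V : Type*} {G : SimpleGraph V} (f : V → ℕ) (x : Sym2 V → ℕ)
    (h0 : ∀ v w : V, G.Adj v w → x s(v, w) = 0 → f v = f w) :
    ∀ {u v : V} (p : G.Walk u v), (∀ e ∈ p.edges, x e = 0) → f u = f v := by
  intro u v p
  induction p with
  | nil => intro _; rfl
  | @cons u w v hadj q ih =>
    intro hz
    have h1 : f u = f w := h0 u w hadj (hz _ (by simp))
    exact h1.trans (ih fun e he => hz e (by simp [he]))

private lemma key_lemma {V : Type*} {G : SimpleGraph V} (f : V → ℕ) (x : Sym2 V → ℕ)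
    (h0 : ∀ v w : V, G.Adj v w → x s(v, w) = 0 → f v = f w) :
    ∀ {u v : V} (p : G.Walk u v) (e : Sym2 V), e ∈ p.edges → p.edges.Nodup →
      (∀ e' ∈ p.edges, e' ≠ e → x e' = 0) →
      (∀ a b : V, e = s(a, b) → f a ≠ f b) → f u ≠ f v := by
  intro u v p
  induction p with
  | nil => intro e he; simp at he
  | @cons u w v hadj q ih =>
    intro e he hnd hz hdiff
    rw [SimpleGraph.Walk.edges_cons] at he hnd hz
    rcases List.mem_cons.mp he with he | he
    · -- e = s(u, w)
      have hq : f w = f v := by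
        refine walk_zero f x h0 q fun e' he' => hz e' (List.mem_cons_of_mem _ he') ?_
        rintro rfl; rw [he] at he'; exact (List.nodup_cons.mp hnd).1 he'
      have hd := hdiff u w he
      rw [hq] at hd; exact hd
    · -- e ∈ q.edges
      have hne : s(u, w) ≠ e := by
        rintro rfl; exact (List.nodup_cons.mp hnd).1 he
      have h1 : f u = f w := h0 u w hadj (hz _ List.mem_cons_self hne)
      have h2 : f w ≠ f v :=
        ih e he (List.nodup_cons.mp hnd).2 (fun e' he' => hz e' (List.mem_cons_of_mem _ he')) hdiff
      rw [h1]; exact h2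

/-- for a 0-1 edge labeling `x`, the set of edges labeled `1` is a
multicut of `G` iff every cycle inequality holds. -/
theorem multicut_iff_cycle_inequalities {V : Type*} [Fintype V] [DecidableEq V]
    (G : SimpleGraph V) [DecidableRel G.Adj]
    (x : Sym2 V → ℕ) (hx : ∀ e, x e = 0 ∨ x e = 1) :
    IsMulticut G (G.edgeFinset.filter (fun e => x e = 1)) ↔
      ∀ (u : V) (c : G.Walk u u), c.IsCycle → ∀ e ∈ c.edges,
        x e ≤ ∑ e' ∈ c.edges.toFinset.erase e, x e' := by
  classical
  set M := G.edgeFinset.filter (fun e => x e = 1) with hM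
  constructor
  · rintro ⟨hsub, f, hf⟩ u c hc e he
    rcases hx e with h0 | h1
    · simp [h0]
    by_contra hlt
    push_neg at hlt
    rw [h1] at hlt
    have hz : ∀ e' ∈ c.edges, e' ≠ e → x e' = 0 := by
      intro e' he' hne
      rcases hx e' with h | h
      · exact h
      · exfalso
        have hmem' : e' ∈ c.edges.toFinset.erase e :=
          Finset.mem_erase.mpr ⟨hne, List.mem_toFinset.mpr he'⟩
        have := Finset.single_le_sum (f := x) (fun i _ => Nat.zero_le (x i)) hmem'
        omega
    have h0' : ∀ v w : V, G.Adj v w → x s(v, w) = 0 → f v = f w := by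
      intro v w hadj hxz
      by_contra hne
      have : s(v, w) ∈ M := (hf v w hadj).mpr hne
      rw [hM, Finset.mem_filter] at this
      omega
    have hdiff : ∀ a b : V, e = s(a, b) → f a ≠ f b := by
      intro a b hab
      have heG : G.Adj a b := by
        have h' := c.edges_subset_edgeSet he
        rw [hab] at h'
        exact h'
      refine (hf a b heG).mp ?_
      rw [hM, Finset.mem_filter]
      exact ⟨SimpleGraph.mem_edgeFinset.mpr heG, hab ▸ h1⟩
    exact key_lemma f x h0' c e he hc.edges_nodup hz hdiff rfl
  · intro hcyc
    constructor
    · intro e heM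
      rw [hM] at heM
      exact SimpleGraph.mem_edgeFinset.mp (Finset.mem_filter.mp heM).1
    · set G' : SimpleGraph V := SimpleGraph.fromRel (fun a b => G.Adj a b ∧ x s(a, b) = 0)
        with hG'
      obtain ⟨g, hg⟩ := Countable.exists_injective_nat G'.ConnectedComponent
      refine ⟨fun v => g (G'.connectedComponentMk v), fun v w hadj => ?_⟩
      have hmem : s(v, w) ∈ M ↔ x s(v, w) = 1 := by
        rw [hM, Finset.mem_filter]
        simp [SimpleGraph.mem_edgeFinset, hadj]
      have hne : (g (G'.connectedComponentMk v) ≠ g (G'.connectedComponentMk w)) ↔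
          ¬ G'.Reachable v w := by
        rw [not_iff_not, hg.eq_iff, SimpleGraph.ConnectedComponent.eq]
      rw [hmem, hne]
      constructor
      · intro h1 hreach
        obtain ⟨p⟩ := hreach.symm
        let p' : G'.Path w v := p.toPath
        have hedges : ∀ e ∈ (p' : G'.Walk w v).edges, e ∈ G.edgeSet ∧ x e = 0 := by
          intro e he
          have : e ∈ G'.edgeSet := SimpleGraph.Walk.edges_subset_edgeSet _ he
          induction e using Sym2.inductionOn with
          | hf a b =>
            rw [SimpleGraph.mem_edgeSet, hG', SimpleGraph.fromRel_adj] at this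
            rcases this.2 with ⟨ha, hz⟩ | ⟨ha, hz⟩
            · exact ⟨G.mem_edgeSet.mpr ha, hz⟩
            · rw [Sym2.eq_swap]; exact ⟨G.mem_edgeSet.mpr ha, hz⟩
        let q : G.Walk w v := (p' : G'.Walk w v).transfer G (fun e he => (hedges e he).1)
        have hq_edges : q.edges = (p' : G'.Walk w v).edges :=
          SimpleGraph.Walk.edges_transfer _ _
        have hq_path : q.IsPath := p'.prop.transfer _
        have hnotin : s(v, w) ∉ q.edges := by
          rw [hq_edges]
          intro hmem'
          have := (hedges _ hmem').2
          omega
        have hcycle : (SimpleGraph.Walk.cons hadj q).IsCycle :=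
          SimpleGraph.Path.cons_isCycle ⟨q, hq_path⟩ hadj hnotin
        have hineq := hcyc v (SimpleGraph.Walk.cons hadj q) hcycle s(v, w) (by simp)
        have hsum : ∑ e' ∈ (SimpleGraph.Walk.cons hadj q).edges.toFinset.erase s(v, w),
            x e' = 0 := by
          refine Finset.sum_eq_zero fun e' he' => ?_
          rw [Finset.mem_erase, List.mem_toFinset, SimpleGraph.Walk.edges_cons,
            List.mem_cons] at he'
          rcases he'.2 with h | h
          · exact absurd h he'.1
          · exact (hedges e' (hq_edges ▸ h)).2
        rw [hsum, h1] at hineq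
        omega
      · intro hnr
        rcases hx s(v, w) with h0 | h1
        · exfalso
          apply hnr
          refine SimpleGraph.Adj.reachable ?_
          rw [hG', SimpleGraph.fromRel_adj]
          exact ⟨hadj.ne, Or.inl ⟨hadj, h0⟩⟩
        · exact h1
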